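/- arXiv:0903.5535 — 7 statements merged into one kernel-verified Lean document; each statement's English description precedes it below -/
import Mathlib

section
/- Let Q, U, W be nonempty finite sets, f : Q × U × W → Q a transition function, and σ : Q × U × W → ℝ a cost function. The following three statements are equivalent: (a) there exists a state feedback law φ : Q → U such that for every initial state q(0) ∈ Q and every input sequence w : ℕ → W, the closed-loop trajectory defined by q(t+1) = f(q(t), φ(q(t)), w(t)) satisfies inf_{T ≥ 0} Σ_{t=0}^{T} σ(q(t), φ(q(t)), w(t)) > −∞; (b) there exists a function J : Q → ℝ with J(q) ≥ 0 for all q and J(q) ≥ 𝕋(J)(q) for all q ∈ Q; (c) the value iteration sequence J₀ = 0, J_{k+1} = max{0, 𝕋(J_k)} (pointwise maximum with the zero function) converges pointwise on Q. -/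
open Finset Filter

/-- Dynamic programming operator:
`𝕋(J)(q) = min_{u ∈ U} max_{w ∈ W} ( -σ(q,u,w) + J(f(q,u,w)) )`. -/
noncomputable def dpOp {Q U W : Type*} [Fintype U] [Nonempty U] [Fintype W] [Nonempty W]
    (f : Q × U × W → Q) (σ : Q × U × W → ℝ) (J : Q → ℝ) : Q → ℝ :=
  fun q => univ.inf' univ_nonempty fun u : U =>
    univ.sup' univ_nonempty fun w : W => -σ (q, u, w) + J (f (q, u, w))

/-- Value iteration sequence: `J₀ = 0`, `J_{k+1} = max {0, 𝕋(J_k)}` (pointwise). -/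
noncomputable def valIter {Q U W : Type*} [Fintype U] [Nonempty U] [Fintype W] [Nonempty W]
    (f : Q × U × W → Q) (σ : Q × U × W → ℝ) : ℕ → Q → ℝ
  | 0 => fun _ => 0
  | k + 1 => fun q => max 0 (dpOp f σ (valIter f σ k) q)

namespace StabAux

variable {Q U W : Type*}

/-- Closed-loop trajectory under feedback `φ`. -/
def traj (f : Q × U × W → Q) (φ : Q → U) (q : Q) (w : ℕ → W) : ℕ → Q
  | 0 => q
  | t + 1 => f (traj f φ q w t, φ (traj f φ q w t), w t)

/-- Accumulated cost over `T` steps. -/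
noncomputable def cost (f : Q × U × W → Q) (σ : Q × U × W → ℝ) (φ : Q → U)
    (q : Q) (w : ℕ → W) (T : ℕ) : ℝ :=
  ∑ t ∈ Finset.range T, σ (traj f φ q w t, φ (traj f φ q w t), w t)

variable (f : Q × U × W → Q) (σ : Q × U × W → ℝ) (φ : Q → U)

lemma traj_congr (q : Q) (w w' : ℕ → W) :
    ∀ T, (∀ t, t < T → w t = w' t) → traj f φ q w T = traj f φ q w' T := by
  intro T
  induction T with
  | zero => intro; rfl
  | succ T ih =>
    intro h
    have h1 : traj f φ q w T = traj f φ q w' T := ih fun t ht => h t (ht.trans (Nat.lt_succ_self T))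
    simp only [traj, h1, h T (Nat.lt_succ_self T)]

lemma cost_congr (q : Q) (w w' : ℕ → W) (T : ℕ) (h : ∀ t, t < T → w t = w' t) :
    cost f σ φ q w T = cost f σ φ q w' T := by
  unfold cost
  refine Finset.sum_congr rfl fun t ht => ?_
  rw [Finset.mem_range] at ht
  rw [traj_congr f φ q w w' t fun s hs => h s (hs.trans ht), h t ht]

lemma traj_add (q : Q) (w : ℕ → W) (T : ℕ) :
    ∀ s, traj f φ q w (T + s) = traj f φ (traj f φ q w T) (fun t => w (T + t)) s := by
  intro s
  induction s with
  | zero => rfl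
  | succ s ih =>
    have e : traj f φ q w (T + (s+1))
        = f (traj f φ q w (T+s), φ (traj f φ q w (T+s)), w (T+s)) := rfl
    rw [e, ih]; rfl

lemma cost_add (q : Q) (w : ℕ → W) (T s : ℕ) :
    cost f σ φ q w (T + s) = cost f σ φ q w T
      + cost f σ φ (traj f φ q w T) (fun t => w (T + t)) s := by
  induction s with
  | zero => simp [cost]
  | succ s ih =>
    unfold cost at *
    rw [← Nat.add_assoc, Finset.sum_range_succ, ih, Finset.sum_range_succ]
    rw [traj_add f φ q w T s]
    ring


/-- "Bad" states: accumulated cost not bounded below. -/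
def Bad (q : Q) : Prop := ∀ C : ℝ, ∃ (w : ℕ → W) (T : ℕ), cost f σ φ q w T < C

lemma exists_uniform_bound [Fintype Q] [Nonempty Q] [Fintype W] [Nonempty W]
    (h : ∀ q : ℕ → Q, ∀ w : ℕ → W,
        (∀ t : ℕ, q (t + 1) = f (q t, φ (q t), w t)) →
        ∃ C : ℝ, ∀ T : ℕ, C ≤ ∑ t ∈ Finset.range (T + 1), σ (q t, φ (q t), w t)) :
    ∀ q : Q, ∃ C : ℝ, ∀ (w : ℕ → W) (T : ℕ), C ≤ cost f σ φ q w T := by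
  classical
  -- per-trajectory lower bounds, in terms of `cost`
  have h' : ∀ (q0 : Q) (w : ℕ → W), ∃ C : ℝ, ∀ T : ℕ, C ≤ cost f σ φ q0 w T := by
    intro q0 w
    obtain ⟨C, hC⟩ := h (traj f φ q0 w) w (fun t => rfl)
    refine ⟨min C 0, fun T => ?_⟩
    cases T with
    | zero => simp [cost]
    | succ T => exact le_trans (min_le_left _ _) (hC T)
  -- it suffices to show no state is Bad
  suffices hB : ∀ q : Q, ¬ Bad f σ φ q by
    intro q
    have := hB q
    unfold Bad at this
    push_neg at this
    obtain ⟨C, hC⟩ := this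
    exact ⟨C, fun w T => hC w T⟩
  -- choice of lower bounds for non-Bad states
  have hCex : ∀ q : Q, ∃ C : ℝ, ¬ Bad f σ φ q → ∀ (w : ℕ → W) (T : ℕ), C ≤ cost f σ φ q w T := by
    intro q
    by_cases hq : Bad f σ φ q
    · exact ⟨0, fun h' => absurd hq h'⟩
    · have := hq
      unfold Bad at this
      push_neg at this
      obtain ⟨C, hC⟩ := this
      exact ⟨C, fun _ w T => hC w T⟩
  choose Cf hCf using hCex
  set m : ℝ := (Finset.univ : Finset Q).inf' Finset.univ_nonempty Cf with hm
  have hmle : ∀ q : Q, ¬ Bad f σ φ q → ∀ (w : ℕ → W) (T : ℕ), m ≤ cost f σ φ q w T :=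
    fun q hq w T => le_trans (Finset.inf'_le Cf (Finset.mem_univ q)) (hCf q hq w T)
  -- uniform bound on single-step `-σ`
  set M : ℝ := (Finset.univ : Finset (Q × W)).sup' Finset.univ_nonempty
      (fun p => -σ (p.1, φ p.1, p.2)) with hM
  have hMle : ∀ (q : Q) (w : W), -σ (q, φ q, w) ≤ M :=
    fun q w => Finset.le_sup' (fun p : Q × W => -σ (p.1, φ p.1, p.2)) (Finset.mem_univ (q, w))
  -- key step: from a Bad state, a nonempty word of cost ≤ -1 ending in a Bad state
  have badStep : ∀ q : Q, Bad f σ φ q → ∃ (w : ℕ → W) (T : ℕ),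
      1 ≤ T ∧ cost f σ φ q w T ≤ -1 ∧ Bad f σ φ (traj f φ q w T) := by
    intro q hq
    obtain ⟨w, T, hT⟩ := hq (min (m - M - 1) (-1))
    set P : ℕ → Prop := fun j => Bad f σ φ (traj f φ q w j) with hP
    have hP0 : P 0 := hq
    set j := Nat.findGreatest P T with hj
    have hjT : j ≤ T := Nat.findGreatest_le T
    have hPj : P j := Nat.findGreatest_spec (Nat.zero_le T) hP0
    rcases eq_or_lt_of_le hjT with hjeq | hjlt
    · -- j = T : the whole word works
      refine ⟨w, T, ?_, ?_, ?_⟩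
      · rcases Nat.eq_zero_or_pos T with h0 | h1
        · exfalso
          rw [h0] at hT
          have h00 : cost f σ φ q w 0 = 0 := by simp [cost]
          rw [h00] at hT
          have := lt_of_lt_of_le hT (min_le_right _ _)
          linarith
        · exact h1
      · exact le_trans hT.le (min_le_right _ _)
      · rw [← hjeq]; exact hPj
    · -- j < T : truncate at j
      have hnot : ¬ P (j + 1) := Nat.findGreatest_is_greatest (Nat.lt_succ_self j) hjlt
      -- bound the tail cost from below
      have htail : m ≤ cost f σ φ (traj f φ q w (j+1)) (fun t => w (j+1+t)) (T - (j+1)) :=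
        hmle _ hnot _ _
      have hsplit : cost f σ φ q w T = cost f σ φ q w (j+1)
          + cost f σ φ (traj f φ q w (j+1)) (fun t => w (j+1+t)) (T - (j+1)) := by
        have : j + 1 + (T - (j+1)) = T := by omega
        rw [← this, cost_add]
        rw [this]
      have hstep1 : cost f σ φ q w (j+1) = cost f σ φ q w j
          + σ (traj f φ q w j, φ (traj f φ q w j), w j) := by
        unfold cost
        rw [Finset.sum_range_succ]
      have hj1 : cost f σ φ q w j < -1 := by
        have h1 : cost f σ φ q w T < m - M - 1 := lt_of_lt_of_le hT (min_le_left _ _)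
        have h2 := hMle (traj f φ q w j) (w j)
        nlinarith [htail, hsplit, hstep1]
      refine ⟨w, j, ?_, hj1.le, hPj⟩
      rcases Nat.eq_zero_or_pos j with h0 | h1
      · exfalso
        rw [h0] at hj1
        have h00 : cost f σ φ q w 0 = 0 := by simp [cost]
        rw [h00] at hj1
        linarith
      · exact h1
  -- now derive a contradiction from any Bad state
  intro q0 hq0
  have stepex : ∀ q : Q, ∃ (w : ℕ → W) (T : ℕ), Bad f σ φ q →
      1 ≤ T ∧ cost f σ φ q w T ≤ -1 ∧ Bad f σ φ (traj f φ q w T) := by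
    intro q
    by_cases hq : Bad f σ φ q
    · obtain ⟨w, T, h1, h2, h3⟩ := badStep q hq
      exact ⟨w, T, fun _ => ⟨h1, h2, h3⟩⟩
    · exact ⟨fun _ => Classical.arbitrary W, 1, fun hh => absurd hh hq⟩
  choose sw sT hstep using stepex
  obtain ⟨Pfun, hP0, hPs⟩ : ∃ Pf : ℕ → (ℕ → W) × ℕ,
      Pf 0 = (fun _ => Classical.arbitrary W, 0) ∧
      ∀ k, Pf (k+1) = (fun t => if t < (Pf k).2 then (Pf k).1 t
          else sw (traj f φ q0 (Pf k).1 (Pf k).2) (t - (Pf k).2),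
        (Pf k).2 + sT (traj f φ q0 (Pf k).1 (Pf k).2)) :=
    ⟨fun k => Nat.rec ((fun _ => Classical.arbitrary W : ℕ → W), 0)
      (fun _ p => ((fun t => if t < p.2 then p.1 t else sw (traj f φ q0 p.1 p.2) (t - p.2)),
        p.2 + sT (traj f φ q0 p.1 p.2))) k, rfl, fun k => rfl⟩
  have inv : ∀ k, Bad f σ φ (traj f φ q0 (Pfun k).1 (Pfun k).2)
      ∧ cost f σ φ q0 (Pfun k).1 (Pfun k).2 ≤ -(k:ℝ) ∧ k ≤ (Pfun k).2 := by
    intro k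
    induction k with
    | zero =>
      rw [hP0]
      exact ⟨hq0, by simp [cost], Nat.zero_le _⟩
    | succ k ih =>
      obtain ⟨hbad, hcost, hT⟩ := ih
      obtain ⟨h1, h2, h3⟩ := hstep (traj f φ q0 (Pfun k).1 (Pfun k).2) hbad
      have hw1 : (Pfun (k+1)).1 = fun t => if t < (Pfun k).2 then (Pfun k).1 t
          else sw (traj f φ q0 (Pfun k).1 (Pfun k).2) (t - (Pfun k).2) := by rw [hPs k]
      have hw2 : (Pfun (k+1)).2 = (Pfun k).2 + sT (traj f φ q0 (Pfun k).1 (Pfun k).2) := by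
        rw [hPs k]
      have hagree : ∀ t, t < (Pfun k).2 → (Pfun (k+1)).1 t = (Pfun k).1 t := by
        intro t ht
        rw [hw1]
        exact if_pos ht
      have htr : traj f φ q0 (Pfun (k+1)).1 (Pfun k).2 = traj f φ q0 (Pfun k).1 (Pfun k).2 :=
        traj_congr f φ q0 _ _ _ hagree
      have htail : (fun t => (Pfun (k+1)).1 ((Pfun k).2 + t))
          = sw (traj f φ q0 (Pfun k).1 (Pfun k).2) := by
        funext t
        rw [hw1]
        simp only []
        rw [if_neg (by omega)]
        congr 1
        omega
      have hcsplit : cost f σ φ q0 (Pfun (k+1)).1 (Pfun (k+1)).2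
          = cost f σ φ q0 (Pfun (k+1)).1 (Pfun k).2
            + cost f σ φ (traj f φ q0 (Pfun k).1 (Pfun k).2)
              (sw (traj f φ q0 (Pfun k).1 (Pfun k).2))
              (sT (traj f φ q0 (Pfun k).1 (Pfun k).2)) := by
        rw [hw2, cost_add, htr, htail]
      have hcpre : cost f σ φ q0 (Pfun (k+1)).1 (Pfun k).2
          = cost f σ φ q0 (Pfun k).1 (Pfun k).2 :=
        cost_congr f σ φ q0 _ _ _ hagree
      have htsplit : traj f φ q0 (Pfun (k+1)).1 (Pfun (k+1)).2
          = traj f φ (traj f φ q0 (Pfun k).1 (Pfun k).2)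
            (sw (traj f φ q0 (Pfun k).1 (Pfun k).2))
            (sT (traj f φ q0 (Pfun k).1 (Pfun k).2)) := by
        rw [hw2, traj_add, htr, htail]
      refine ⟨?_, ?_, ?_⟩
      · rw [htsplit]; exact h3
      · rw [hcsplit, hcpre]
        push_cast
        linarith
      · rw [hw2]; omega
  have hTmono : Monotone fun k => (Pfun k).2 := by
    apply monotone_nat_of_le_succ
    intro k
    rw [hPs k]
    exact Nat.le_add_right _ _
  have hagree1 : ∀ k t, t < (Pfun k).2 → (Pfun (k+1)).1 t = (Pfun k).1 t := by
    intro k t ht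
    have hw1 : (Pfun (k+1)).1 = fun t => if t < (Pfun k).2 then (Pfun k).1 t
        else sw (traj f φ q0 (Pfun k).1 (Pfun k).2) (t - (Pfun k).2) := by rw [hPs k]
    rw [hw1]
    exact if_pos ht
  have hagree : ∀ k m, k ≤ m → ∀ t, t < (Pfun k).2 → (Pfun m).1 t = (Pfun k).1 t := by
    intro k m hkm
    induction m, hkm using Nat.le_induction with
    | base => intro t _; rfl
    | succ n hn ih =>
      intro t ht
      have ht' : t < (Pfun n).2 := lt_of_lt_of_le ht (hTmono hn)
      rw [hagree1 n t ht', ih t ht]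
  set winf : ℕ → W := fun t => (Pfun (t+1)).1 t with hwinf
  have hwcost : ∀ k, cost f σ φ q0 winf (Pfun k).2 = cost f σ φ q0 (Pfun k).1 (Pfun k).2 := by
    intro k
    apply cost_congr
    intro t ht
    show (Pfun (t+1)).1 t = (Pfun k).1 t
    rcases le_total k (t+1) with hc | hc
    · exact hagree k (t+1) hc t ht
    · have ht' : t < (Pfun (t+1)).2 := lt_of_lt_of_le (Nat.lt_succ_self t) (inv (t+1)).2.2
      exact (hagree (t+1) k hc t ht').symm
  obtain ⟨C, hC⟩ := h' q0 winf
  obtain ⟨k, hk⟩ := exists_nat_gt (-C)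
  have h1 := hC (Pfun k).2
  have h2 : cost f σ φ q0 winf (Pfun k).2 ≤ -(k:ℝ) := by
    rw [hwcost k]; exact (inv k).2.1
  linarith

lemma one_imp_two [Fintype Q] [Nonempty Q] [Fintype U] [Nonempty U] [Fintype W] [Nonempty W]
    (h : ∃ φ : Q → U, ∀ q : ℕ → Q, ∀ w : ℕ → W,
        (∀ t : ℕ, q (t + 1) = f (q t, φ (q t), w t)) →
        ∃ C : ℝ, ∀ T : ℕ, C ≤ ∑ t ∈ Finset.range (T + 1), σ (q t, φ (q t), w t)) :
    ∃ J : Q → ℝ, (∀ q : Q, 0 ≤ J q) ∧ (∀ q : Q, dpOp f σ J q ≤ J q) := by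
  classical
  obtain ⟨φ, hφ⟩ := h
  have hb := exists_uniform_bound f σ φ hφ
  choose Cf hCf using hb
  set J : Q → ℝ := fun q => sSup (Set.range fun p : (ℕ → W) × ℕ => -cost f σ φ q p.1 p.2)
    with hJ
  have hbdd : ∀ q : Q, BddAbove (Set.range fun p : (ℕ → W) × ℕ => -cost f σ φ q p.1 p.2) := by
    intro q
    refine ⟨-Cf q, ?_⟩
    rintro x ⟨p, rfl⟩
    exact neg_le_neg (hCf q p.1 p.2)
  have hne : ∀ q : Q, (Set.range fun p : (ℕ → W) × ℕ => -cost f σ φ q p.1 p.2).Nonempty :=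
    fun q => ⟨_, ⟨((fun _ => Classical.arbitrary W : ℕ → W), 0), rfl⟩⟩
  have hmem : ∀ (q : Q) (w : ℕ → W) (T : ℕ), -cost f σ φ q w T ≤ J q :=
    fun q w T => le_csSup (hbdd q) ⟨(w, T), rfl⟩
  have hJ0 : ∀ q : Q, 0 ≤ J q := by
    intro q
    have := hmem q (fun _ => Classical.arbitrary W) 0
    simpa [cost] using this
  refine ⟨J, hJ0, ?_⟩
  intro q
  refine le_trans (Finset.inf'_le _ (Finset.mem_univ (φ q))) ?_
  apply Finset.sup'_le
  intro w0 _
  have key : J (f (q, φ q, w0)) ≤ J q + σ (q, φ q, w0) := by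
    apply csSup_le (hne _)
    rintro x ⟨⟨w', T'⟩, rfl⟩
    set wc : ℕ → W := fun t => match t with | 0 => w0 | s+1 => w' s with hwc
    have htail : (fun t => wc (1 + t)) = w' := by
      funext t
      show wc (1 + t) = w' t
      rw [Nat.add_comm]
    have htr : traj f φ q wc 1 = f (q, φ q, w0) := rfl
    have hsplit : cost f σ φ q wc (1 + T')
        = cost f σ φ q wc 1 + cost f σ φ (f (q, φ q, w0)) w' T' := by
      rw [cost_add, htr, htail]
    have hc1 : cost f σ φ q wc 1 = σ (q, φ q, w0) := by
      simp [cost]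
      rfl
    have := hmem q wc (1 + T')
    rw [hsplit, hc1] at this
    simp only []
    linarith
  have := key
  linarith

lemma dpOp_mono [Fintype U] [Nonempty U] [Fintype W] [Nonempty W]
    (J J' : Q → ℝ) (h : ∀ q, J q ≤ J' q) : ∀ q, dpOp f σ J q ≤ dpOp f σ J' q := by
  intro q
  apply Finset.le_inf'
  intro u _
  refine le_trans (Finset.inf'_le _ (Finset.mem_univ u)) ?_
  apply Finset.sup'_le
  intro w _
  refine le_trans ?_ (Finset.le_sup'
    (fun w : W => -σ (q, u, w) + J' (f (q, u, w))) (Finset.mem_univ w))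
  have := h (f (q, u, w))
  linarith

lemma valIter_mono [Fintype U] [Nonempty U] [Fintype W] [Nonempty W] (k : ℕ) :
    ∀ q, valIter f σ k q ≤ valIter f σ (k+1) q := by
  induction k with
  | zero => intro q; exact le_max_left 0 _
  | succ k ih =>
    intro q
    exact max_le_max (le_refl 0) (dpOp_mono f σ _ _ ih q)

lemma valIter_le [Fintype U] [Nonempty U] [Fintype W] [Nonempty W]
    (J : Q → ℝ) (hJ0 : ∀ q, 0 ≤ J q) (hJT : ∀ q, dpOp f σ J q ≤ J q) :
    ∀ (k : ℕ) (q : Q), valIter f σ k q ≤ J q := by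
  intro k
  induction k with
  | zero => intro q; exact hJ0 q
  | succ k ih => intro q; exact max_le (hJ0 q) (le_trans (dpOp_mono f σ _ _ ih q) (hJT q))

end StabAux

theorem stmt_0 {Q U W : Type*} [Fintype Q] [Nonempty Q] [Fintype U] [Nonempty U]
    [Fintype W] [Nonempty W] (f : Q × U × W → Q) (σ : Q × U × W → ℝ) :
    List.TFAE [
      -- (a) existence of a stabilizing state feedback law
      (∃ φ : Q → U, ∀ q : ℕ → Q, ∀ w : ℕ → W,
        (∀ t : ℕ, q (t + 1) = f (q t, φ (q t), w t)) →
        ∃ C : ℝ, ∀ T : ℕ, C ≤ ∑ t ∈ Finset.range (T + 1), σ (q t, φ (q t), w t)),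
      -- (b) existence of a nonnegative `J` with `J ≥ 𝕋(J)`
      (∃ J : Q → ℝ, (∀ q : Q, 0 ≤ J q) ∧ (∀ q : Q, dpOp f σ J q ≤ J q)),
      -- (c) pointwise convergence of the value iteration sequence
      (∃ Jstar : Q → ℝ, ∀ q : Q,
        Tendsto (fun k => valIter f σ k q) atTop (nhds (Jstar q)))
    ] := by
  tfae_have 1 → 2 := StabAux.one_imp_two f σ
  tfae_have 2 → 3 := by
    rintro ⟨J, hJ0, hJT⟩
    refine ⟨fun q => ⨆ k, valIter f σ k q, fun q => ?_⟩
    apply tendsto_atTop_ciSup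
    · exact monotone_nat_of_le_succ fun k => StabAux.valIter_mono f σ k q
    · exact ⟨J q, by rintro x ⟨k, rfl⟩; exact StabAux.valIter_le f σ J hJ0 hJT k q⟩
  tfae_have 3 → 2 := by
    rintro ⟨Jstar, hconv⟩
    have hmono : ∀ q : Q, Monotone fun k => valIter f σ k q :=
      fun q => monotone_nat_of_le_succ fun k => StabAux.valIter_mono f σ k q
    have hle : ∀ (k : ℕ) (q : Q), valIter f σ k q ≤ Jstar q :=
      fun k q => (hmono q).ge_of_tendsto (hconv q) k
    refine ⟨Jstar, fun q => hle 0 q, fun q => ?_⟩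
    have hd : Tendsto (fun k => dpOp f σ (valIter f σ k) q) atTop (nhds (dpOp f σ Jstar q)) := by
      unfold dpOp
      apply Filter.Tendsto.finset_inf'_nhds_apply
      intro u _
      apply Filter.Tendsto.finset_sup'_nhds_apply
      intro w _
      exact tendsto_const_nhds.add (hconv (f (q, u, w)))
    have h2 : Tendsto (fun k => valIter f σ (k+1) q) atTop (nhds (Jstar q)) :=
      (hconv q).comp (tendsto_add_atTop_nat 1)
    exact le_of_tendsto_of_tendsto' hd h2 fun k => le_max_right _ _
  tfae_have 2 → 1 := by
    rintro ⟨J, hJ0, hJT⟩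
    have hφex : ∀ q : Q, ∃ u : U,
        (univ.sup' univ_nonempty fun w : W => -σ (q, u, w) + J (f (q, u, w))) = dpOp f σ J q := by
      intro q
      obtain ⟨u, _, hu⟩ := Finset.exists_mem_eq_inf' (univ_nonempty)
        (fun u : U => univ.sup' univ_nonempty fun w : W => -σ (q, u, w) + J (f (q, u, w)))
      exact ⟨u, hu.symm⟩
    choose φ hφ using hφex
    refine ⟨φ, fun q w hrec => ⟨-J (q 0), fun T => ?_⟩⟩
    have key : ∀ t : ℕ, J (q (t+1)) - J (q t) ≤ σ (q t, φ (q t), w t) := by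
      intro t
      have h1 : -σ (q t, φ (q t), w t) + J (f (q t, φ (q t), w t)) ≤ dpOp f σ J (q t) := by
        rw [← hφ (q t)]
        exact Finset.le_sup'
          (fun w' : W => -σ (q t, φ (q t), w') + J (f (q t, φ (q t), w')))
          (Finset.mem_univ (w t))
      rw [← hrec t] at h1
      have := hJT (q t)
      linarith
    have tel : ∀ T : ℕ, J (q (T+1)) - J (q 0)
        ≤ ∑ t ∈ Finset.range (T+1), σ (q t, φ (q t), w t) := by
      intro T
      induction T with
      | zero => simpa using key 0
      | succ T ih =>
        rw [Finset.sum_range_succ]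
        have := key (T+1)
        linarith
    have h1 := tel T
    have h2 := hJ0 (q (T+1))
    linarith
  tfae_finish
end

section
/- Let Q, U, W be nonempty finite sets, f : Q × U × W → Q, and σ : Q × U × W → ℝ. Suppose J : Q → ℝ satisfies J(q) ≥ 0 and J(q) ≥ 𝕋(J)(q) for all q ∈ Q. Define the feedback law φ : Q → U by choosing, for each q, φ(q) to be a minimizer of u ↦ max_{w ∈ W} ( −σ(q,u,w) + J(f(q,u,w)) ). Then for every initial state q(0) ∈ Q and every input sequence w : ℕ → W, the closed-loop trajectory q(t+1) = f(q(t), φ(q(t)), w(t)) satisfies inf_{T ≥ 0} Σ_{t=0}^{T} σ(q(t), φ(q(t)), w(t)) > −∞. -/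
open Finset

theorem stmt_1 {Q U W : Type*} [Fintype Q] [Nonempty Q] [Fintype U] [Nonempty U]
    [Fintype W] [Nonempty W] (f : Q × U × W → Q) (σ : Q × U × W → ℝ)
    (J : Q → ℝ) (hJ0 : ∀ q : Q, 0 ≤ J q) (hJT : ∀ q : Q, dpOp f σ J q ≤ J q)
    (φ : Q → U)
    -- φ(q) is a minimizer of  u ↦ max_{w ∈ W} ( -σ(q,u,w) + J(f(q,u,w)) )
    (hφ : ∀ q : Q, ∀ u : U,
      (univ.sup' univ_nonempty fun w : W => -σ (q, φ q, w) + J (f (q, φ q, w))) ≤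
      (univ.sup' univ_nonempty fun w : W => -σ (q, u, w) + J (f (q, u, w)))) :
    ∀ q : ℕ → Q, ∀ w : ℕ → W,
      (∀ t : ℕ, q (t + 1) = f (q t, φ (q t), w t)) →
      ∃ C : ℝ, ∀ T : ℕ, C ≤ ∑ t ∈ Finset.range (T + 1), σ (q t, φ (q t), w t) := by
  intro q w hq
  -- step inequality: J(q(t+1)) - J(q t) ≤ σ_t
  have hstep : ∀ t : ℕ, J (q (t + 1)) - J (q t) ≤ σ (q t, φ (q t), w t) := by
    intro t
    have h1 : (univ.sup' univ_nonempty fun w' : W =>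
        -σ (q t, φ (q t), w') + J (f (q t, φ (q t), w'))) ≤ J (q t) := by
      refine le_trans ?_ (hJT (q t))
      exact Finset.le_inf' _ _ fun u _ => hφ (q t) u
    have h2 : -σ (q t, φ (q t), w t) + J (f (q t, φ (q t), w t)) ≤
        univ.sup' univ_nonempty fun w' : W =>
          -σ (q t, φ (q t), w') + J (f (q t, φ (q t), w')) :=
      Finset.le_sup' (fun w' : W => -σ (q t, φ (q t), w') + J (f (q t, φ (q t), w'))) (mem_univ (w t))
    have := le_trans h2 h1
    rw [hq t]
    linarith
  refine ⟨-J (q 0), fun T => ?_⟩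
  have htel : ∀ T : ℕ, J (q (T + 1)) - J (q 0) ≤
      ∑ t ∈ Finset.range (T + 1), σ (q t, φ (q t), w t) := by
    intro T
    induction T with
    | zero => simpa using hstep 0
    | succ n ih =>
      rw [Finset.sum_range_succ]
      have := hstep (n + 1)
      linarith
  have := htel T
  have := hJ0 (q (T + 1))
  linarith
end

section
/- Let Q, U, W be nonempty finite sets, f : Q × U × W → Q, and σ : Q × U × W → ℝ. Suppose there exists a state feedback law φ : Q → U such that for every initial state q(0) ∈ Q and every input sequence w : ℕ → W, the closed-loop trajectory q(t+1) = f(q(t), φ(q(t)), w(t)) satisfies inf_{T ≥ 0} Σ_{t=0}^{T} σ(q(t), φ(q(t)), w(t)) > −∞. Then the value iteration sequence J₀ = 0, J_{k+1} = max{0, 𝕋(J_k)} (pointwise maximum with the zero function) converges pointwise on Q. -/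
open Finset Filter

open Finset Filter

namespace Stmt2Aux

variable {Q W : Type*}

def traj (step : Q → W → Q) (q0 : Q) (w : ℕ → W) : ℕ → Q
  | 0 => q0
  | t + 1 => step (traj step q0 w t) (w t)

noncomputable def psum (step : Q → W → Q) (cost : Q → W → ℝ) (q0 : Q) (w : ℕ → W) (T : ℕ) :
    ℝ := ∑ t ∈ Finset.range T, cost (traj step q0 w t) (w t)

lemma psum_succ (step : Q → W → Q) (cost : Q → W → ℝ) (q0 : Q) (w : ℕ → W) (T : ℕ) :
    psum step cost q0 w (T + 1)
      = psum step cost q0 w T + cost (traj step q0 w T) (w T) :=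
  Finset.sum_range_succ _ _

lemma crux [Fintype Q] [Nonempty Q] [Fintype W] [Nonempty W]
    (step : Q → W → Q) (cost : Q → W → ℝ)
    (h : ∀ (q0 : Q) (w : ℕ → W), ∃ C, ∀ T, C ≤ psum step cost q0 w (T + 1)) :
    ∃ B : ℝ, ∀ (q0 : Q) (w : ℕ → W) (T : ℕ), -B ≤ psum step cost q0 w T := by
  classical
  by_contra hB
  push_neg at hB
  set NQ := Fintype.card Q with hNQ
  obtain ⟨M, hM0, hM⟩ : ∃ M : ℝ, 0 ≤ M ∧ ∀ q w, |cost q w| ≤ M := by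
    refine ⟨Finset.univ.sup' univ_nonempty (fun p : Q × W => |cost p.1 p.2|) ⊔ 0,
      le_sup_right, fun q w => ?_⟩
    exact le_trans (Finset.le_sup' (f := fun p : Q × W => |cost p.1 p.2|) (Finset.mem_univ (q, w)))
      le_sup_left
  obtain ⟨q0, w, T0, hT0⟩ := hB ((NQ : ℝ) * M)
  set S : ℕ → ℝ := psum step cost q0 w with hS
  have hstep1 : ∀ t, S t - M ≤ S (t + 1) := by
    intro t
    have h1 := psum_succ step cost q0 w t
    have h2 := abs_le.1 (hM (traj step q0 w t) (w t))
    simp only [← hS] at h1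
    linarith [h1, h2.1]
  have hex : ∀ k : ℕ, k ≤ NQ → ∃ t, S t < -((k : ℝ) * M) := by
    intro k hk
    refine ⟨T0, lt_of_lt_of_le hT0 ?_⟩
    have : (k : ℝ) * M ≤ (NQ : ℝ) * M :=
      mul_le_mul_of_nonneg_right (by exact_mod_cast hk) hM0
    linarith
  set idx : ℕ → ℕ := fun k =>
    if hk : ∃ t, S t < -((k : ℝ) * M) then Nat.find hk else 0 with hidx
  have hidx_spec : ∀ k, k ≤ NQ → S (idx k) < -((k : ℝ) * M) := by
    intro k hk
    simp only [hidx, dif_pos (hex k hk)]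
    exact Nat.find_spec (hex k hk)
  have hidx_min : ∀ k, k ≤ NQ → ∀ t, t < idx k → ¬ S t < -((k : ℝ) * M) := by
    intro k hk t ht
    simp only [hidx, dif_pos (hex k hk)] at ht
    exact Nat.find_min (hex k hk) ht
  have hS0 : S 0 = 0 := by simp [hS, psum]
  have hidx_pos : ∀ k, k ≤ NQ → 0 < idx k := by
    intro k hk
    rcases (Nat.eq_zero_or_pos (idx k)).symm with h | h
    · exact h
    · exfalso
      have := hidx_spec k hk
      rw [h, hS0] at this
      nlinarith [mul_nonneg (Nat.cast_nonneg (α := ℝ) k) hM0]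
  have hlow : ∀ k, k ≤ NQ → -(((k : ℝ) + 1) * M) ≤ S (idx k) := by
    intro k hk
    obtain ⟨t, ht⟩ := Nat.exists_eq_succ_of_ne_zero (Nat.pos_iff_ne_zero.1 (hidx_pos k hk))
    have h1 : ¬ S t < -((k : ℝ) * M) := hidx_min k hk t (by omega)
    have h2 := hstep1 t
    rw [ht]
    push_neg at h1
    linarith
  have hdec : ∀ a b, a < b → b ≤ NQ → S (idx b) < S (idx a) := by
    intro a b hab hb
    have h1 := hidx_spec b hb
    have h2 := hlow a (le_trans (le_of_lt hab) hb)
    have h3 : ((a : ℝ) + 1) * M ≤ (b : ℝ) * M := by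
      have : (a : ℝ) + 1 ≤ (b : ℝ) := by exact_mod_cast hab
      exact mul_le_mul_of_nonneg_right this hM0
    linarith
  have hmono : ∀ a b, a < b → b ≤ NQ → idx a < idx b := by
    intro a b hab hb
    have ha := le_trans (le_of_lt hab) hb
    have h1 : S (idx b) < -((a : ℝ) * M) := by
      have h2 := hidx_spec b hb
      have h3 : (a : ℝ) * M ≤ (b : ℝ) * M :=
        mul_le_mul_of_nonneg_right (by exact_mod_cast (le_of_lt hab)) hM0
      linarith
    have hle : idx a ≤ idx b := by
      simp only [hidx, dif_pos (hex a ha)]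
      exact Nat.find_le (by simpa only [hidx, dif_pos (hex b hb)] using h1)
    rcases lt_or_eq_of_le hle with h | h
    · exact h
    · exfalso; have := hdec a b hab hb; rw [h] at this; linarith
  -- pigeonhole
  obtain ⟨a, b, hab, hFab⟩ := Fintype.exists_ne_map_eq_of_card_lt
    (fun k : Fin (NQ + 1) => traj step q0 w (idx (k : ℕ)))
    (by simp [hNQ])
  -- wlog a < b
  obtain ⟨a, b, hab, hFab⟩ : ∃ a b : Fin (NQ + 1), a < b ∧
      traj step q0 w (idx (a : ℕ)) = traj step q0 w (idx (b : ℕ)) := by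
    rcases hab.lt_or_gt with h | h
    · exact ⟨a, b, h, hFab⟩
    · exact ⟨b, a, h, hFab.symm⟩
  have ha : (a : ℕ) ≤ NQ := by omega
  have hb : (b : ℕ) ≤ NQ := by omega
  have habn : (a : ℕ) < (b : ℕ) := hab
  set i := idx (a : ℕ) with hi
  set j := idx (b : ℕ) with hj
  have hij : i < j := hmono _ _ habn hb
  have hQij : traj step q0 w i = traj step q0 w j := hFab
  have hSS : S j < S i := hdec _ _ habn hb
  set p := j - i with hp
  have hpp : 0 < p := by omega
  have hipj : i + p = j := by omega
  set w' : ℕ → W := fun t => if t < i then w t else w (i + (t - i) % p) with hw'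
  have hw'_agree : ∀ t, t < j → w' t = w t := by
    intro t ht
    simp only [hw']
    by_cases h : t < i
    · simp [h]
    · push_neg at h
      have h1 : t - i < p := by omega
      rw [if_neg (by omega), Nat.mod_eq_of_lt h1]
      congr 1; omega
  have htraj_agree : ∀ t, t ≤ j → traj step q0 w' t = traj step q0 w t := by
    intro t ht
    induction t with
    | zero => rfl
    | succ t ih =>
        simp only [traj]
        rw [ih (by omega), hw'_agree t (by omega)]
  have hw'per : ∀ t, i ≤ t → w' (t + p) = w' t := by
    intro t ht
    simp only [hw']
    rw [if_neg (by omega), if_neg (by omega)]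
    congr 2
    have : t + p - i = (t - i) + p := by omega
    rw [this, Nat.add_mod_right]
  have htraj'per : ∀ d, traj step q0 w' (i + d + p) = traj step q0 w' (i + d) := by
    intro d
    induction d with
    | zero =>
        have e1 : i + 0 + p = j := by omega
        have e2 : i + 0 = i := by omega
        rw [e1, e2, htraj_agree j le_rfl, htraj_agree i (by omega), ← hQij]
    | succ d ih =>
        have e1 : i + (d + 1) + p = (i + d + p) + 1 := by omega
        have e2 : i + (d + 1) = (i + d) + 1 := by omega
        rw [e1, e2]
        simp only [traj]
        rw [ih, hw'per (i + d) (by omega)]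
  set c' : ℕ → ℝ := fun t => cost (traj step q0 w' t) (w' t) with hc'
  have hcost'per : ∀ t, i ≤ t → c' (t + p) = c' t := by
    intro t ht
    have e : t = i + (t - i) := by omega
    simp only [hc']
    rw [e]
    rw [htraj'per (t - i), hw'per (i + (t - i)) (by omega)]
  have hcost'per' : ∀ k t, i ≤ t → c' (t + k * p) = c' t := by
    intro k
    induction k with
    | zero => intro t ht; simp
    | succ k ih =>
        intro t ht
        have e : t + (k + 1) * p = (t + k * p) + p := by ring
        rw [e, hcost'per (t + k * p) (by omega), ih t ht]
  set S' : ℕ → ℝ := psum step cost q0 w' with hS'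
  have hS'eq : ∀ t, t ≤ j → S' t = S t := by
    intro t ht
    simp only [hS', hS, psum]
    apply Finset.sum_congr rfl
    intro x hx
    rw [Finset.mem_range] at hx
    rw [htraj_agree x (by omega), hw'_agree x (by omega)]
  have hS'sum : ∀ n m : ℕ, S' (n + m) = S' n + ∑ t ∈ Finset.range m, c' (n + t) := by
    intro n m
    simp only [hS', psum, hc']
    rw [Finset.sum_range_add]
  have hblock : ∀ k : ℕ, S' (i + k * p) = S i + (k : ℝ) * (S j - S i) := by
    intro k
    induction k with
    | zero => simp [hS'eq i (by omega)]
    | succ k ih =>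
        have e : i + (k + 1) * p = (i + k * p) + p := by ring
        rw [e, hS'sum (i + k * p) p]
        have hsumeq : ∑ t ∈ Finset.range p, c' (i + k * p + t)
            = ∑ t ∈ Finset.range p, c' (i + t) := by
          apply Finset.sum_congr rfl
          intro x hx
          have e2 : i + k * p + x = (i + x) + k * p := by ring
          rw [e2, hcost'per' k (i + x) (by omega)]
        have hsump : ∑ t ∈ Finset.range p, c' (i + t) = S j - S i := by
          have := hS'sum i p
          rw [hipj] at this
          rw [hS'eq j le_rfl, hS'eq i (by omega)] at this
          linarith
        rw [ih, hsumeq, hsump]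
        push_cast
        ring
  obtain ⟨C, hC⟩ := h q0 w'
  set δ : ℝ := S i - S j with hδ
  have hδpos : 0 < δ := by simp only [hδ]; linarith
  obtain ⟨k, hk⟩ := exists_nat_gt (max ((S i - C) / δ) 0)
  have hk0 : 0 < k := by
    have : (0 : ℝ) < (k : ℝ) := lt_of_le_of_lt (le_max_right ((S i - C) / δ) 0) hk
    exact_mod_cast this
  have hkδ : S i - C < (k : ℝ) * δ := by
    have h1 : (S i - C) / δ < (k : ℝ) := lt_of_le_of_lt (le_max_left _ _) hk
    calc S i - C = ((S i - C) / δ) * δ := by field_simp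
    _ < (k : ℝ) * δ := by exact mul_lt_mul_of_pos_right h1 hδpos
  have hkp1 : 1 ≤ k * p := Nat.one_le_iff_ne_zero.2 (by positivity)
  have hT1 : (i + k * p - 1) + 1 = i + k * p := by omega
  have hfinal : C ≤ S' (i + k * p - 1 + 1) := hC (i + k * p - 1)
  rw [hT1, hblock k] at hfinal
  simp only [hδ] at hkδ
  nlinarith

end Stmt2Aux


theorem stmt_2 {Q U W : Type*} [Fintype Q] [Nonempty Q] [Fintype U] [Nonempty U]
    [Fintype W] [Nonempty W] (f : Q × U × W → Q) (σ : Q × U × W → ℝ)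
    (h : ∃ φ : Q → U, ∀ q : ℕ → Q, ∀ w : ℕ → W,
      (∀ t : ℕ, q (t + 1) = f (q t, φ (q t), w t)) →
      ∃ C : ℝ, ∀ T : ℕ, C ≤ ∑ t ∈ Finset.range (T + 1), σ (q t, φ (q t), w t)) :
    ∃ Jstar : Q → ℝ, ∀ q : Q,
      Tendsto (fun k => valIter f σ k q) atTop (nhds (Jstar q)) := by
  classical
  open Stmt2Aux in
  obtain ⟨φ, hφ⟩ := h
  set step : Q → W → Q := fun q w => f (q, φ q, w) with hstepdef
  set cost : Q → W → ℝ := fun q w => σ (q, φ q, w) with hcostdef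
  have hyp : ∀ (q0 : Q) (w : ℕ → W), ∃ C, ∀ T, C ≤ psum step cost q0 w (T + 1) := by
    intro q0 w
    obtain ⟨C, hC⟩ := hφ (traj step q0 w) w (fun t => rfl)
    exact ⟨C, fun T => by simpa [psum, hcostdef] using hC T⟩
  obtain ⟨B, hB⟩ := Stmt2Aux.crux step cost hyp
  set gset : Q → Set ℝ := fun q => {x | ∃ (w : ℕ → W) (T : ℕ), x = -psum step cost q w T}
    with hgsetdef
  have hmem0 : ∀ q, (0 : ℝ) ∈ gset q := by
    intro q
    exact ⟨Classical.arbitrary _, 0, by simp [psum]⟩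
  have hbdd : ∀ q, BddAbove (gset q) := by
    intro q
    refine ⟨B, ?_⟩
    rintro x ⟨w, T, rfl⟩
    have := hB q w T
    linarith
  set g : Q → ℝ := fun q => sSup (gset q) with hgdef
  have hg0 : ∀ q, 0 ≤ g q := fun q => le_csSup (hbdd q) (hmem0 q)
  have hbell : ∀ q w0, g (step q w0) ≤ g q + cost q w0 := by
    intro q w0
    apply csSup_le ⟨0, hmem0 _⟩
    rintro x ⟨w, T, rfl⟩
    set w'' : ℕ → W := fun t => match t with | 0 => w0 | t + 1 => w t with hw''
    have hagree : ∀ t, traj step q w'' (t + 1) = traj step (step q w0) w t := by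
      intro t
      induction t with
      | zero => rfl
      | succ t ih =>
          show step (traj step q w'' (t + 1)) (w'' (t + 1))
            = step (traj step (step q w0) w t) (w t)
          rw [ih]
    have hsum : psum step cost q w'' (T + 1)
        = (∑ t ∈ Finset.range T, cost (traj step (step q w0) w t) (w t)) + cost q w0 := by
      simp only [psum]
      rw [Finset.sum_range_succ']
      congr 1
      apply Finset.sum_congr rfl
      intro t _
      rw [hagree t]
    have hmem : -psum step cost q w'' (T + 1) ∈ gset q := ⟨w'', T + 1, rfl⟩
    have hle := le_csSup (hbdd q) hmem
    have : -psum step cost (step q w0) w T = -psum step cost q w'' (T + 1) + cost q w0 := by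
      simp only [psum] at hsum ⊢
      rw [hsum]; ring
    rw [this]
    linarith
  have hdpmono : ∀ J J' : Q → ℝ, (∀ q, J q ≤ J' q) → ∀ q, dpOp f σ J q ≤ dpOp f σ J' q := by
    intro J J' hJJ q
    apply Finset.le_inf'
    intro u _
    refine le_trans (Finset.inf'_le _ (Finset.mem_univ u)) (Finset.sup'_le _ _ ?_)
    intro w _
    refine le_trans ?_ (Finset.le_sup' _ (Finset.mem_univ w))
    have := hJJ (f (q, u, w))
    linarith
  have hub : ∀ k q, valIter f σ k q ≤ g q := by
    intro k
    induction k with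
    | zero => intro q; simp only [valIter]; exact hg0 q
    | succ k ih =>
        intro q
        simp only [valIter]
        apply max_le (hg0 q)
        have h1 : dpOp f σ (valIter f σ k) q
            ≤ univ.sup' univ_nonempty
              (fun w : W => -σ (q, φ q, w) + valIter f σ k (f (q, φ q, w))) :=
          Finset.inf'_le _ (Finset.mem_univ (φ q))
        refine le_trans h1 (Finset.sup'_le _ _ ?_)
        intro w _
        have h2 := ih (f (q, φ q, w))
        have h3 := hbell q w
        simp only [hstepdef, hcostdef] at h3
        linarith
  have hmono : ∀ k q, valIter f σ k q ≤ valIter f σ (k + 1) q := by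
    intro k
    induction k with
    | zero => intro q; simp only [valIter]; exact le_max_left _ _
    | succ k ih =>
        intro q
        simp only [valIter]
        exact max_le_max le_rfl (hdpmono _ _ ih q)
  refine ⟨fun q => ⨆ k, valIter f σ k q, fun q => ?_⟩
  apply tendsto_atTop_ciSup (monotone_nat_of_le_succ (fun k => hmono k q))
  refine ⟨g q, ?_⟩
  rintro x ⟨k, rfl⟩
  exact hub k q
end

section
/- Let Q, U, W be nonempty finite sets, f : Q × U × W → Q a transition function, and σ : Q × U × W → ℝ. The following two statements are equivalent: (a) for every pair of input sequences u : ℕ → U and w : ℕ → W and every initial state q(0) ∈ Q, the trajectory defined by q(t+1) = f(q(t), u(t), w(t)) satisfies inf_{T ≥ 0} Σ_{t=0}^{T} σ(q(t), u(t), w(t)) > −∞; (b) there exists a nonnegative function J : Q → ℝ such that J(f(q,u,w)) − J(q) ≤ σ(q,u,w) for all q ∈ Q, u ∈ U, and w ∈ W. -/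
namespace Stmt4Aux

variable {Q A : Type*}

def traj (g : Q → A → Q) (q : Q) (uw : ℕ → A) : ℕ → Q
  | 0 => q
  | n + 1 => g (traj g q uw n) (uw n)

def cost (g : Q → A → Q) (s : Q → A → ℝ) (q : Q) (uw : ℕ → A) (n : ℕ) : ℝ :=
  ∑ t ∈ Finset.range n, s (traj g q uw t) (uw t)

theorem traj_add (g : Q → A → Q) (q : Q) (uw : ℕ → A) (a b : ℕ) :
    traj g q uw (a + b) = traj g (traj g q uw a) (fun t => uw (a + t)) b := by
  induction b with
  | zero => rfl
  | succ b ih =>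
    show g (traj g q uw (a+b)) (uw (a+b)) = _
    rw [ih]; rfl

theorem cost_add (g : Q → A → Q) (s : Q → A → ℝ) (q : Q) (uw : ℕ → A) (a b : ℕ) :
    cost g s q uw (a + b) =
      cost g s q uw a + cost g s (traj g q uw a) (fun t => uw (a + t)) b := by
  unfold cost
  rw [Finset.sum_range_add]
  congr 1
  refine Finset.sum_congr rfl fun t _ => ?_
  rw [← traj_add]

theorem traj_congr (g : Q → A → Q) (q : Q) (uw₁ uw₂ : ℕ → A) (n : ℕ)
    (h : ∀ t < n, uw₁ t = uw₂ t) : ∀ t ≤ n, traj g q uw₁ t = traj g q uw₂ t := by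
  intro t ht
  induction t with
  | zero => rfl
  | succ t ih =>
    simp only [traj, ih (Nat.le_of_succ_le ht), h t (Nat.lt_of_succ_le ht)]

theorem cost_congr (g : Q → A → Q) (s : Q → A → ℝ) (q : Q) (uw₁ uw₂ : ℕ → A) (n : ℕ)
    (h : ∀ t < n, uw₁ t = uw₂ t) : cost g s q uw₁ n = cost g s q uw₂ n := by
  unfold cost
  refine Finset.sum_congr rfl fun t ht => ?_
  rw [Finset.mem_range] at ht
  rw [traj_congr g q uw₁ uw₂ n h t ht.le, h t ht]


theorem cycle_nonneg (g : Q → A → Q) (s : Q → A → ℝ)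
    (ha : ∀ (q : ℕ → Q) (aa : ℕ → A), (∀ t, q (t + 1) = g (q t) (aa t)) →
      ∃ C : ℝ, ∀ T : ℕ, C ≤ ∑ t ∈ Finset.range (T + 1), s (q t) (aa t))
    (q : Q) (uw : ℕ → A) (n : ℕ) (hn : 0 < n) (hcyc : traj g q uw n = q) :
    0 ≤ cost g s q uw n := by
  by_contra hneg
  push_neg at hneg
  set c := cost g s q uw n with hc
  set uw' : ℕ → A := fun t => uw (t % n) with huw'
  have hshift : ∀ k : ℕ, (fun t => uw' (k * n + t)) = uw' := by
    intro k
    funext t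
    simp only [huw']
    rw [Nat.add_comm, Nat.mul_comm, Nat.add_mul_mod_self_left]
  have hpre : ∀ t < n, uw' t = uw t := by
    intro t ht
    simp only [huw', Nat.mod_eq_of_lt ht]
  have key : ∀ k : ℕ, traj g q uw' (k * n) = q ∧
      cost g s q uw' (k * n) = (k : ℝ) * c := by
    intro k
    induction k with
    | zero => exact ⟨by simp [traj], by simp [cost]⟩
    | succ k ih =>
      have hmul : (k + 1) * n = k * n + n := by ring
      constructor
      · rw [hmul, traj_add, ih.1, hshift,
          traj_congr g q uw' uw n hpre n le_rfl, hcyc]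
      · rw [hmul, cost_add, ih.1, hshift, ih.2,
          cost_congr g s q uw' uw n hpre, ← hc]
        push_cast
        ring
  obtain ⟨C, hC⟩ := ha (fun t => traj g q uw' t) uw' (fun t => rfl)
  obtain ⟨k, hk⟩ := exists_nat_gt (C / c)
  have hk1 : C / c < (k : ℝ) + 1 := lt_trans hk (by linarith)
  have hlt : ((k : ℝ) + 1) * c < C := by
    rw [div_lt_iff_of_neg hneg] at hk1
    linarith [hk1]
  have hT := hC ((k + 1) * n - 1)
  rw [Nat.sub_add_cancel (Nat.one_le_iff_ne_zero.2 (by positivity))] at hT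
  have : (∑ t ∈ Finset.range ((k + 1) * n), s (traj g q uw' t) (uw' t)) =
      cost g s q uw' ((k + 1) * n) := rfl
  rw [this, (key (k + 1)).2] at hT
  push_cast at hT
  linarith


theorem cost_bound [Fintype Q] (g : Q → A → Q) (s : Q → A → ℝ) (M : ℝ) (hM : 0 ≤ M)
    (hs : ∀ x a, -M ≤ s x a)
    (hcyc : ∀ q uw (n : ℕ), 0 < n → traj g q uw n = q → 0 ≤ cost g s q uw n) :
    ∀ (n : ℕ) (q : Q) (uw : ℕ → A),
      -((Fintype.card Q : ℝ) * M) ≤ cost g s q uw n := by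
  intro n
  induction n using Nat.strong_induction_on with
  | _ n IH =>
  intro q uw
  set N := Fintype.card Q with hN
  rcases le_or_gt n N with hle | hlt
  · -- short trajectory: each step ≥ -M
    have h1 : -((n : ℝ) * M) ≤ cost g s q uw n := by
      have := Finset.sum_le_sum (f := fun _ : ℕ => -M)
        (g := fun t => s (traj g q uw t) (uw t)) (s := Finset.range n)
        (fun t _ => hs _ _)
      simpa [cost, mul_comm] using this
    have h2 : (n : ℝ) * M ≤ (N : ℝ) * M :=
      mul_le_mul_of_nonneg_right (by exact_mod_cast hle) hM
    linarith
  · -- pigeonhole: find a repeated state among traj 0 .. N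
    have hcard : Fintype.card Q < Fintype.card (Fin (N + 1)) := by simp [hN]
    obtain ⟨i, j, hij, heq⟩ :=
      Fintype.exists_ne_map_eq_of_card_lt (fun i : Fin (N + 1) => traj g q uw i) hcard
    -- wlog i < j
    wlog hlt' : (i : ℕ) < (j : ℕ) generalizing i j
    · have hne : (i : ℕ) ≠ (j : ℕ) := fun h => hij (Fin.ext h)
      exact this j i hij.symm heq.symm (by omega)
    set a := (i : ℕ)
    set b := (j : ℕ)
    have hbN : b ≤ N := Nat.lt_succ_iff.mp j.isLt
    have hab : a < b := hlt'
    set d := b - a with hd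
    have hdpos : 0 < d := by omega
    have hadb : a + d = b := by omega
    have hbn : b ≤ n := le_trans hbN hlt.le
    set q1 := traj g q uw a with hq1
    -- the cycle at q1
    have hcycle : traj g q1 (fun t => uw (a + t)) d = q1 := by
      rw [← traj_add, hadb]
      exact heq.symm
    have hcycnn : 0 ≤ cost g s q1 (fun t => uw (a + t)) d :=
      hcyc _ _ _ hdpos hcycle
    -- the shortened input
    set uw₂ : ℕ → A := fun t => if t < a then uw t else uw (t + d) with huw2
    have hpre : ∀ t < a, uw₂ t = uw t := fun t ht => if_pos ht
    have htraj2 : traj g q uw₂ a = q1 := traj_congr g q uw₂ uw a hpre a le_rfl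
    have hcost2 : cost g s q uw₂ a = cost g s q uw a := cost_congr g s q uw₂ uw a hpre
    have hshift2 : (fun t => uw₂ (a + t)) = (fun t => uw (b + t)) := by
      funext t
      have : ¬ a + t < a := by omega
      simp only [huw2, if_neg this]
      congr 1
      omega
    -- decompose cost of uw₂ over n - d
    have hnd : n - d = a + (n - b) := by omega
    have hcost_short : cost g s q uw₂ (n - d) =
        cost g s q uw a + cost g s q1 (fun t => uw (b + t)) (n - b) := by
      rw [hnd, cost_add, htraj2, hcost2, hshift2]
    -- decompose cost of uw over n
    have hnsplit : n = a + (d + (n - b)) := by omega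
    have hcost_full : cost g s q uw n =
        cost g s q uw a + (cost g s q1 (fun t => uw (a + t)) d
          + cost g s (traj g q1 (fun t => uw (a + t)) d)
              (fun t => uw (a + (d + t))) (n - b)) := by
      conv_lhs => rw [hnsplit]
      rw [cost_add, cost_add, ← hq1]
    have hshift3 : (fun t => uw (a + (d + t))) = (fun t => uw (b + t)) := by
      funext t; congr 1; omega
    rw [hcycle, hshift3] at hcost_full
    have hIH := IH (n - d) (by omega) q uw₂
    rw [hcost_short] at hIH
    rw [hcost_full]
    linarith


def cons (a : A) (uw : ℕ → A) : ℕ → A := fun t => Nat.rec a (fun t' _ => uw t') t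

theorem traj_cons (g : Q → A → Q) (q : Q) (a : A) (uw : ℕ → A) :
    ∀ t, traj g q (cons a uw) (t + 1) = traj g (g q a) uw t := by
  intro t
  induction t with
  | zero => rfl
  | succ t ih =>
    show g (traj g q (cons a uw) (t + 1)) (cons a uw (t + 1)) = _
    rw [ih]
    rfl

theorem cost_cons (g : Q → A → Q) (s : Q → A → ℝ) (q : Q) (a : A) (uw : ℕ → A) (n : ℕ) :
    cost g s q (cons a uw) (n + 1) = s q a + cost g s (g q a) uw n := by
  unfold cost
  rw [Finset.sum_range_succ']
  rw [add_comm]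
  congr 1
  refine Finset.sum_congr rfl fun t _ => ?_
  rw [traj_cons]
  rfl

end Stmt4Aux

open Stmt4Aux

theorem stmt_4 {Q U W : Type*} [Fintype Q] [Nonempty Q] [Fintype U] [Nonempty U]
    [Fintype W] [Nonempty W] (f : Q × U × W → Q) (σ : Q × U × W → ℝ) :
    -- (a) every trajectory, for every pair of input sequences and initial state,
    -- has partial sums of the cost bounded below
    (∀ q : ℕ → Q, ∀ u : ℕ → U, ∀ w : ℕ → W,
      (∀ t : ℕ, q (t + 1) = f (q t, u t, w t)) →
      ∃ C : ℝ, ∀ T : ℕ, C ≤ ∑ t ∈ Finset.range (T + 1), σ (q t, u t, w t)) ↔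
    -- (b) existence of a nonnegative storage function
    (∃ J : Q → ℝ, (∀ q : Q, 0 ≤ J q) ∧
      ∀ (q : Q) (u : U) (w : W), J (f (q, u, w)) - J q ≤ σ (q, u, w)) := by
  set g : Q → U × W → Q := fun q a => f (q, a.1, a.2) with hg
  set s : Q → U × W → ℝ := fun q a => σ (q, a.1, a.2) with hs
  constructor
  · intro ha
    -- abstract form of (a)
    have ha' : ∀ (q : ℕ → Q) (aa : ℕ → U × W), (∀ t, q (t + 1) = g (q t) (aa t)) →
        ∃ C : ℝ, ∀ T : ℕ, C ≤ ∑ t ∈ Finset.range (T + 1), s (q t) (aa t) := by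
      intro q aa hrec
      exact ha q (fun t => (aa t).1) (fun t => (aa t).2) hrec
    -- bound on |σ|
    have hne : (Finset.univ : Finset (Q × U × W)).Nonempty := Finset.univ_nonempty
    set M : ℝ := (Finset.univ : Finset (Q × U × W)).sup' hne (fun x => |σ x|) with hM
    have hM0 : 0 ≤ M := by
      obtain ⟨x, hx⟩ := hne
      exact le_trans (abs_nonneg (σ x)) (Finset.le_sup' (fun y => |σ y|) hx)
    have hMs : ∀ (x : Q) (a : U × W), -M ≤ s x a := by
      intro x a
      have h1 : |σ (x, a.1, a.2)| ≤ M :=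
        Finset.le_sup' (fun y => |σ y|) (Finset.mem_univ (x, a.1, a.2))
      have h2 := neg_abs_le (σ (x, a.1, a.2))
      calc -M ≤ -|σ (x, a.1, a.2)| := by linarith
        _ ≤ s x a := h2
    -- no negative cycles, hence uniform lower bound on costs
    have hcyc : ∀ (q : Q) (uw : ℕ → U × W) (n : ℕ), 0 < n → traj g q uw n = q →
        0 ≤ cost g s q uw n := fun q uw n h1 h2 => cycle_nonneg g s ha' q uw n h1 h2
    have hbound := cost_bound g s M hM0 hMs hcyc
    set B : ℝ := (Fintype.card Q : ℝ) * M with hB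
    -- available storage
    set J : Q → ℝ := fun q =>
      sSup (Set.range fun p : (ℕ → U × W) × ℕ => -cost g s q p.1 p.2) with hJ
    have hBdd : ∀ q : Q, BddAbove (Set.range fun p : (ℕ → U × W) × ℕ => -cost g s q p.1 p.2) := by
      intro q
      refine ⟨B, ?_⟩
      rintro x ⟨⟨uw, n⟩, rfl⟩
      have := hbound n q uw
      simp only
      linarith
    have hmem0 : ∀ q : Q, (0 : ℝ) ∈ Set.range fun p : (ℕ → U × W) × ℕ => -cost g s q p.1 p.2 := by
      intro q
      exact ⟨⟨fun _ => Classical.arbitrary (U × W), 0⟩, by simp [cost]⟩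
    refine ⟨J, fun q => le_csSup (hBdd q) (hmem0 q), ?_⟩
    intro q u w
    have key : J (g q (u, w)) ≤ s q (u, w) + J q := by
      refine csSup_le ⟨0, hmem0 _⟩ ?_
      rintro x ⟨⟨uw, n⟩, rfl⟩
      have hc : -cost g s (g q (u, w)) uw n = s q (u, w) +
          (-cost g s q (cons (u, w) uw) (n + 1)) := by
        rw [cost_cons]
        ring
      simp only
      rw [hc]
      have hle : -cost g s q (cons (u, w) uw) (n + 1) ≤ J q :=
        le_csSup (hBdd q) ⟨⟨cons (u, w) uw, n + 1⟩, rfl⟩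
      linarith
    have : f (q, u, w) = g q (u, w) := rfl
    rw [this]
    have : σ (q, u, w) = s q (u, w) := rfl
    rw [this]
    linarith
  · rintro ⟨J, hJ0, hJd⟩ q u w hrec
    refine ⟨-(J (q 0)), fun T => ?_⟩
    have htel : ∑ t ∈ Finset.range (T + 1), (J (q (t + 1)) - J (q t)) =
        J (q (T + 1)) - J (q 0) := Finset.sum_range_sub (fun t => J (q t)) (T + 1)
    have hle : ∑ t ∈ Finset.range (T + 1), (J (q (t + 1)) - J (q t)) ≤
        ∑ t ∈ Finset.range (T + 1), σ (q t, u t, w t) := by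
      refine Finset.sum_le_sum fun t _ => ?_
      rw [hrec t]
      exact hJd (q t) (u t) (w t)
    have := hJ0 (q (T + 1))
    linarith [htel ▸ hle]
end

section
/- Let R, W, V̂, U be nonempty finite sets, and let ρ_S : R × W → ℝ, μ_S : V̂ × U → ℝ, ρ_Δ : U → ℝ, μ_Δ : W → ℝ. Let r : ℕ → R, w : ℕ → W, v̂ : ℕ → V̂, u : ℕ → U be sequences such that inf_{T ≥ 0} Σ_{t=0}^{T} ( ρ_S(r(t), w(t)) − μ_S(v̂(t), u(t)) ) > −∞ and inf_{T ≥ 0} Σ_{t=0}^{T} ( ρ_Δ(u(t)) − μ_Δ(w(t)) ) > −∞. Define ρ : R → ℝ by ρ(r) = max_{w ∈ W} ( ρ_S(r, w) − μ_Δ(w) ) and μ : V̂ → ℝ by μ(v̂) = min_{u ∈ U} ( μ_S(v̂, u) − ρ_Δ(u) ). Then inf_{T ≥ 0} Σ_{t=0}^{T} ( ρ(r(t)) − μ(v̂(t)) ) > −∞. -/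
open Finset

theorem stmt_6 {R W V U : Type*} [Fintype R] [Nonempty R] [Fintype W] [Nonempty W]
    [Fintype V] [Nonempty V] [Fintype U] [Nonempty U]
    (ρS : R × W → ℝ) (μS : V × U → ℝ) (ρΔ : U → ℝ) (μΔ : W → ℝ)
    (r : ℕ → R) (w : ℕ → W) (v : ℕ → V) (u : ℕ → U)
    (hS : ∃ C : ℝ, ∀ T : ℕ,
      C ≤ ∑ t ∈ Finset.range (T + 1), (ρS (r t, w t) - μS (v t, u t)))
    (hΔ : ∃ C : ℝ, ∀ T : ℕ,
      C ≤ ∑ t ∈ Finset.range (T + 1), (ρΔ (u t) - μΔ (w t))) :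
    ∃ C : ℝ, ∀ T : ℕ,
      C ≤ ∑ t ∈ Finset.range (T + 1),
        ((univ.sup' univ_nonempty fun w' : W => ρS (r t, w') - μΔ w') -
          (univ.inf' univ_nonempty fun u' : U => μS (v t, u') - ρΔ u')) := by
  obtain ⟨C1, h1⟩ := hS
  obtain ⟨C2, h2⟩ := hΔ
  refine ⟨C1 + C2, fun T => ?_⟩
  have key : ∀ t, (ρS (r t, w t) - μS (v t, u t)) + (ρΔ (u t) - μΔ (w t)) ≤
      (univ.sup' univ_nonempty fun w' : W => ρS (r t, w') - μΔ w') -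
        (univ.inf' univ_nonempty fun u' : U => μS (v t, u') - ρΔ u') := by
    intro t
    have hsup : ρS (r t, w t) - μΔ (w t) ≤
        univ.sup' univ_nonempty fun w' : W => ρS (r t, w') - μΔ w' :=
      le_sup' (fun w' : W => ρS (r t, w') - μΔ w') (mem_univ (w t))
    have hinf : (univ.inf' univ_nonempty fun u' : U => μS (v t, u') - ρΔ u') ≤
        μS (v t, u t) - ρΔ (u t) := inf'_le (fun u' : U => μS (v t, u') - ρΔ u') (mem_univ (u t))
    linarith
  calc C1 + C2 ≤ (∑ t ∈ Finset.range (T + 1), (ρS (r t, w t) - μS (v t, u t))) +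
      ∑ t ∈ Finset.range (T + 1), (ρΔ (u t) - μΔ (w t)) := add_le_add (h1 T) (h2 T)
    _ = ∑ t ∈ Finset.range (T + 1),
        ((ρS (r t, w t) - μS (v t, u t)) + (ρΔ (u t) - μΔ (w t))) := (Finset.sum_add_distrib).symm
    _ ≤ _ := Finset.sum_le_sum fun t _ => key t
end

section
/- Let R, W, V̂, U be nonempty finite sets, and let ρ_S : R × W → ℝ, μ_S : V̂ × U → ℝ, ρ_Δ : U → ℝ, μ_Δ : W → ℝ. Let τ > 0 be a real scalar. Let r : ℕ → R, w : ℕ → W, v̂ : ℕ → V̂, u : ℕ → U be sequences such that inf_{T ≥ 0} Σ_{t=0}^{T} ( ρ_S(r(t), w(t)) − μ_S(v̂(t), u(t)) ) > −∞ and inf_{T ≥ 0} Σ_{t=0}^{T} ( ρ_Δ(u(t)) − μ_Δ(w(t)) ) > −∞. Define ρ_τ : R → ℝ by ρ_τ(r) = max_{w ∈ W} ( ρ_S(r, w) − τ·μ_Δ(w) ) and μ_τ : V̂ → ℝ by μ_τ(v̂) = min_{u ∈ U} ( μ_S(v̂, u) − τ·ρ_Δ(u) ). Then inf_{T ≥ 0}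 Σ_{t=0}^{T} ( ρ_τ(r(t)) − μ_τ(v̂(t)) ) > −∞. -/
open Finset

theorem stmt_7 {R W V U : Type*} [Fintype R] [Nonempty R] [Fintype W] [Nonempty W]
    [Fintype V] [Nonempty V] [Fintype U] [Nonempty U]
    (ρS : R × W → ℝ) (μS : V × U → ℝ) (ρΔ : U → ℝ) (μΔ : W → ℝ)
    (τ : ℝ) (hτ : 0 < τ)
    (r : ℕ → R) (w : ℕ → W) (v : ℕ → V) (u : ℕ → U)
    (hS : ∃ C : ℝ, ∀ T : ℕ,
      C ≤ ∑ t ∈ Finset.range (T + 1), (ρS (r t, w t) - μS (v t, u t)))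
    (hΔ : ∃ C : ℝ, ∀ T : ℕ,
      C ≤ ∑ t ∈ Finset.range (T + 1), (ρΔ (u t) - μΔ (w t))) :
    ∃ C : ℝ, ∀ T : ℕ,
      C ≤ ∑ t ∈ Finset.range (T + 1),
        ((univ.sup' univ_nonempty fun w' : W => ρS (r t, w') - τ * μΔ w') -
          (univ.inf' univ_nonempty fun u' : U => μS (v t, u') - τ * ρΔ u')) := by
  obtain ⟨C1, hC1⟩ := hS
  obtain ⟨C2, hC2⟩ := hΔ
  refine ⟨C1 + τ * C2, fun T => ?_⟩
  have key : ∀ t : ℕ,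
      (ρS (r t, w t) - μS (v t, u t)) + τ * (ρΔ (u t) - μΔ (w t)) ≤
      ((univ.sup' univ_nonempty fun w' : W => ρS (r t, w') - τ * μΔ w') -
        (univ.inf' univ_nonempty fun u' : U => μS (v t, u') - τ * ρΔ u')) := by
    intro t
    have h1 : ρS (r t, w t) - τ * μΔ (w t) ≤
        univ.sup' univ_nonempty fun w' : W => ρS (r t, w') - τ * μΔ w' :=
      le_sup' (fun w' : W => ρS (r t, w') - τ * μΔ w') (mem_univ (w t))
    have h2 : (univ.inf' univ_nonempty fun u' : U => μS (v t, u') - τ * ρΔ u') ≤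
        μS (v t, u t) - τ * ρΔ (u t) :=
      inf'_le (fun u' : U => μS (v t, u') - τ * ρΔ u') (mem_univ (u t))
    nlinarith
  calc C1 + τ * C2 ≤ (∑ t ∈ Finset.range (T + 1), (ρS (r t, w t) - μS (v t, u t)))
      + τ * ∑ t ∈ Finset.range (T + 1), (ρΔ (u t) - μΔ (w t)) := by
        have := hC1 T; have := hC2 T; nlinarith
    _ = ∑ t ∈ Finset.range (T + 1),
        ((ρS (r t, w t) - μS (v t, u t)) + τ * (ρΔ (u t) - μΔ (w t))) := by
        rw [Finset.sum_add_distrib, Finset.mul_sum]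
    _ ≤ _ := Finset.sum_le_sum fun t _ => key t
end

section
/- Let Q, U, W be nonempty finite sets, f : Q × U × W → Q, and σ : Q × U × W → ℝ. Suppose J : Q → ℝ satisfies J(q) ≥ 0 and J(q) ≥ 𝕋(J)(q) for all q ∈ Q. Then the value iteration sequence J₀ = 0, J_{k+1} = max{0, 𝕋(J_k)} (pointwise maximum with the zero function) satisfies J_k(q) ≤ J(q) for every k ∈ ℕ and every q ∈ Q; consequently the sequence (J_k) converges pointwise on Q to a limit J* with J*(q) ≤ J(q) for all q ∈ Q. -/
open Finset Filter

lemma dpOp_mono {Q U W : Type*} [Fintype U] [Nonempty U] [Fintype W] [Nonempty W]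
    (f : Q × U × W → Q) (σ : Q × U × W → ℝ) {J J' : Q → ℝ} (h : ∀ q, J q ≤ J' q) :
    ∀ q, dpOp f σ J q ≤ dpOp f σ J' q := by
  intro q
  unfold dpOp
  rw [Finset.le_inf'_iff]
  intro u hu
  refine Finset.inf'_le_of_le _ hu (Finset.sup'_le _ _ fun w hw =>
    le_trans (add_le_add le_rfl (h _)) (Finset.le_sup' (fun w => -σ (q, u, w) + J' (f (q, u, w))) hw))

theorem stmt_11 {Q U W : Type*} [Fintype Q] [Nonempty Q] [Fintype U] [Nonempty U]
    [Fintype W] [Nonempty W] (f : Q × U × W → Q) (σ : Q × U × W → ℝ)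
    (J : Q → ℝ) (hJ0 : ∀ q : Q, 0 ≤ J q) (hJT : ∀ q : Q, dpOp f σ J q ≤ J q) :
    (∀ (k : ℕ) (q : Q), valIter f σ k q ≤ J q) ∧
    ∃ Jstar : Q → ℝ, (∀ q : Q,
        Tendsto (fun k => valIter f σ k q) atTop (nhds (Jstar q))) ∧
      ∀ q : Q, Jstar q ≤ J q := by
  have hle : ∀ (k : ℕ) (q : Q), valIter f σ k q ≤ J q := by
    intro k
    induction k with
    | zero => exact hJ0
    | succ k ih =>
      intro q
      exact max_le (hJ0 q) (le_trans (dpOp_mono f σ ih q) (hJT q))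
  have hmono : ∀ (k : ℕ) (q : Q), valIter f σ k q ≤ valIter f σ (k + 1) q := by
    intro k
    induction k with
    | zero => intro q; exact le_max_left _ _
    | succ k ih =>
      intro q
      exact max_le_max le_rfl (dpOp_mono f σ ih q)
  have hmono' : ∀ q, Monotone fun k => valIter f σ k q := fun q =>
    monotone_nat_of_le_succ (fun k => hmono k q)
  have hbdd : ∀ q, BddAbove (Set.range fun k => valIter f σ k q) := by
    intro q
    exact ⟨J q, by rintro x ⟨k, rfl⟩; exact hle k q⟩
  refine ⟨hle, fun q => ⨆ k, valIter f σ k q, fun q => ?_, fun q => ?_⟩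
  · exact tendsto_atTop_ciSup (hmono' q) (hbdd q)
  · exact ciSup_le fun k => hle k q
end
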